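/- Let w be a non-overlapping word of length m over a finite alphabet, X_1,...,X_n i.i.d., and N_w = Σ_{i=1}^{n-m+1} 1[X_i^{i+m-1} = w]. Then for every t ≥ 1, E(N_w^t) = Σ_{s=1}^{min(T,t)} A_{t,s} · (n - s·m + s choose s) · P(w)^s, where A_{t,s} = Σ_r (s choose r) r^t (-1)^{s-r} is the number of surjections from {1,...,t} onto {1,...,s}, and T = max{t ∈ ℕ : n - t·m ≥ 0}. -/

import Mathlib

def occursAt {α : Type*} (w x : List α) (i : ℕ) : Prop :=
  i + w.length ≤ x.length ∧ (x.drop i).take w.length = w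

def NonOverlappingPair {α : Type*} (w1 w2 : List α) : Prop :=
  ¬ ∃ (x : List α) (i j : ℕ), x.length < w1.length + w2.length ∧
      occursAt w1 x i ∧ occursAt w2 x j ∧ (w1 ≠ w2 ∨ i ≠ j)

def NonOverlapping {α : Type*} (w : List α) : Prop := NonOverlappingPair w w

open Finset

/-- Factorization of product-measure sums under injective pointwise constraints. -/
lemma fact_lemma {A : Type*} [Fintype A] [DecidableEq A] (p : A → ℝ) (hp1 : ∑ a, p a = 1)
    {n : ℕ} {κ : Type*} [Fintype κ] [DecidableEq κ] (T : Finset κ) (e : κ → Fin n) (v : κ → A)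
    (he : Set.InjOn e T) :
    ∑ x : Fin n → A, (∏ i, p (x i)) * ∏ k ∈ T, (if x (e k) = v k then (1:ℝ) else 0)
      = ∏ k ∈ T, p (v k) := by
  have key : ∀ x : Fin n → A,
      (∏ i, p (x i)) * ∏ k ∈ T, (if x (e k) = v k then (1:ℝ) else 0)
      = ∏ idx : Fin n, (p (x idx) *
          ∏ k ∈ T.filter (fun k => e k = idx), (if x idx = v k then (1:ℝ) else 0)) := by
    intro x
    rw [prod_mul_distrib]
    congr 1
    rw [← Finset.prod_fiberwise_of_maps_to (g := e) (t := univ)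
      (fun k _ => mem_univ (e k)) (fun k => if x (e k) = v k then (1:ℝ) else 0)]
    refine prod_congr rfl fun idx _ => ?_
    refine prod_congr rfl fun k hk => ?_
    rw [(mem_filter.1 hk).2]
  calc ∑ x : Fin n → A, (∏ i, p (x i)) * ∏ k ∈ T, (if x (e k) = v k then (1:ℝ) else 0)
      = ∑ x : Fin n → A, ∏ idx : Fin n, (p (x idx) *
          ∏ k ∈ T.filter (fun k => e k = idx), (if x idx = v k then (1:ℝ) else 0)) :=
        sum_congr rfl fun x _ => key x
    _ = ∏ idx : Fin n, ∑ a : A, (p a *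
          ∏ k ∈ T.filter (fun k => e k = idx), (if a = v k then (1:ℝ) else 0)) := by
        rw [prod_univ_sum]
        rw [Fintype.piFinset_univ]
    _ = ∏ idx : Fin n, ∏ k ∈ T.filter (fun k => e k = idx), p (v k) := by
        refine prod_congr rfl fun idx _ => ?_
        rcases (T.filter (fun k => e k = idx)).eq_empty_or_nonempty with h | ⟨k₀, hk₀⟩
        · simp [h, hp1]
        · have hsing : T.filter (fun k => e k = idx) = {k₀} := by
            refine eq_singleton_iff_unique_mem.2 ⟨hk₀, fun k hk => ?_⟩
            have h1 := mem_filter.1 hk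
            have h2 := mem_filter.1 hk₀
            exact he h1.1 h2.1 (h1.2.trans h2.2.symm)
          simp only [hsing, prod_singleton, mul_ite, mul_one, mul_zero]
          simp
    _ = ∏ k ∈ T, p (v k) :=
        Finset.prod_fiberwise_of_maps_to (fun k _ => mem_univ (e k)) _

lemma alt_sum_powerset {α : Type*} [DecidableEq α] (U : Finset α) :
    ∑ T ∈ U.powerset, (-1:ℝ)^(U.card - T.card) = if U = ∅ then 1 else 0 := by
  have h1 : ∀ T ∈ U.powerset, (-1:ℝ)^(U.card - T.card) = (-1)^U.card * (-1)^T.card := by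
    intro T hT
    have hle : T.card ≤ U.card := card_le_card (mem_powerset.1 hT)
    have : U.card - T.card + 2 * T.card = U.card + T.card := by omega
    have h2 : ((-1:ℝ))^(U.card - T.card) * (-1)^(2*T.card) = (-1)^(U.card + T.card) := by
      rw [← pow_add, this]
    have h3 : ((-1:ℝ))^(2*T.card) = 1 := by
      rw [pow_mul]; norm_num
    rw [h3, mul_one] at h2
    rw [h2, pow_add]
  rw [sum_congr rfl h1, ← mul_sum]
  have h4 : ∑ T ∈ U.powerset, (-1:ℝ)^T.card = if U = ∅ then 1 else 0 := by
    by_cases h : U = ∅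
    · simp [h]
    · have := Finset.sum_powerset_neg_one_pow_card_of_nonempty
        (Finset.nonempty_iff_ne_empty.2 h) (x := U)
      rw [if_neg h]
      exact_mod_cast this
  rw [h4]
  by_cases h : U = ∅ <;> simp [h]

lemma mobius_lemma {α : Type*} [DecidableEq α] (c d : Finset α → ℝ)
    (hd : ∀ R, d R = ∑ R' ∈ R.powerset, c R') (S : Finset α) :
    ∑ R ∈ S.powerset, (-1:ℝ)^(S.card - R.card) * d R = c S := by
  have step1 : ∀ R ∈ S.powerset, (-1:ℝ)^(S.card - R.card) * d R
      = ∑ R' ∈ S.powerset, (if R' ⊆ R then (-1:ℝ)^(S.card - R.card) * c R' else 0) := by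
    intro R hR
    rw [hd, mul_sum]
    have hfil : S.powerset.filter (fun R' => R' ⊆ R) = R.powerset := by
      ext R'
      simp only [mem_filter, mem_powerset]
      exact ⟨fun h => h.2, fun h => ⟨h.trans (mem_powerset.1 hR), h⟩⟩
    rw [← Finset.sum_filter, hfil]
  rw [sum_congr rfl step1, sum_comm]
  have step2 : ∀ R' ∈ S.powerset,
      (∑ R ∈ S.powerset, if R' ⊆ R then (-1:ℝ)^(S.card - R.card) * c R' else 0)
      = c R' * (if R' = S then 1 else 0) := by
    intro R' hR'
    have hR'S : R' ⊆ S := mem_powerset.1 hR'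
    rw [sum_ite, sum_const_zero, add_zero]
    have himg : S.powerset.filter (fun R => R' ⊆ R)
        = (S \ R').powerset.image (fun T => R' ∪ T) := by
      ext R
      simp only [mem_filter, mem_powerset, mem_image]
      constructor
      · rintro ⟨hRS, hR'R⟩
        exact ⟨R \ R', by simp [sdiff_subset_sdiff hRS (Finset.Subset.refl R')],
          by rw [union_sdiff_of_subset hR'R]⟩
      · rintro ⟨T, hT, rfl⟩
        exact ⟨union_subset hR'S (hT.trans sdiff_subset), subset_union_left⟩
    rw [himg, sum_image ?inj]
    case inj =>
      intro T1 h1 T2 h2 heq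
      have d1 : Disjoint R' T1 := disjoint_of_subset_right (mem_powerset.1 h1) disjoint_sdiff
      have d2 : Disjoint R' T2 := disjoint_of_subset_right (mem_powerset.1 h2) disjoint_sdiff
      have := congrArg (· \ R') heq
      simpa [union_sdiff_cancel_left d1, union_sdiff_cancel_left d2] using this
    have hcards : ∀ T ∈ (S \ R').powerset,
        S.card - (R' ∪ T).card = (S \ R').card - T.card := by
      intro T hT
      have dT : Disjoint R' T := disjoint_of_subset_right (mem_powerset.1 hT) disjoint_sdiff
      rw [card_union_of_disjoint dT, card_sdiff_of_subset hR'S]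
      omega
    calc ∑ T ∈ (S \ R').powerset, (-1:ℝ)^(S.card - (R' ∪ T).card) * c R'
        = (∑ T ∈ (S \ R').powerset, (-1:ℝ)^((S \ R').card - T.card)) * c R' := by
          rw [sum_mul]
          exact sum_congr rfl fun T hT => by rw [hcards T hT]
      _ = (if S \ R' = ∅ then 1 else 0) * c R' := by rw [alt_sum_powerset]
      _ = c R' * (if R' = S then 1 else 0) := by
          have : S \ R' = ∅ ↔ R' = S := by
            rw [sdiff_eq_empty_iff_subset]
            exact ⟨fun h => (Finset.Subset.antisymm hR'S h).symm ▸ rfl, fun h => h ▸ Finset.Subset.refl S⟩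
          by_cases h : R' = S <;> simp [this, h]
  rw [sum_congr rfl step2]
  rw [sum_eq_single S (fun R' _ hne => by simp [hne]) (fun h => absurd (mem_powerset_self S) h)]
  simp

section
variable {L m s K : ℕ}

lemma spread_chain {L m s : ℕ} {S : Finset (Fin L)}
    (hsp : ∀ i ∈ S, ∀ j ∈ S, Fin.val i < Fin.val j → Fin.val i + m ≤ Fin.val j)
    (hcard : S.card = s) :
    ∀ (d k : ℕ) (h : k + d < s),
      (S.orderEmbOfFin hcard ⟨k, by omega⟩).val + d * m
        ≤ (S.orderEmbOfFin hcard ⟨k + d, h⟩).val := by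
  intro d
  induction d with
  | zero => intro k h; simp
  | succ d ih =>
    intro k h
    have h1 : k + d < s := by omega
    have ihk := ih k h1
    have hlt : (⟨k+d, h1⟩ : Fin s) < ⟨k+d+1, by omega⟩ := by simp [Fin.mk_lt_mk]
    have hmono := (S.orderEmbOfFin hcard).strictMono hlt
    have hadj : (S.orderEmbOfFin hcard ⟨k+d, h1⟩).val + m
        ≤ (S.orderEmbOfFin hcard ⟨k+d+1, by omega⟩).val :=
      hsp _ (Finset.orderEmbOfFin_mem S hcard ⟨k+d, h1⟩) _
        (Finset.orderEmbOfFin_mem S hcard ⟨k+d+1, by omega⟩) hmono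
    have hidx : (⟨k + (d+1), h⟩ : Fin s) = ⟨k+d+1, by omega⟩ := rfl
    rw [hidx]
    have hm1 : (d+1)*m = d*m + m := by ring
    omega

lemma image_sorted_eq {α : Type*} [LinearOrder α] [DecidableEq α] {S : Finset α} {s : ℕ}
    (h : S.card = s) :
    image (fun k => S.orderEmbOfFin h k) univ = S := by
  apply Finset.eq_of_subset_of_card_le
  · intro x hx
    obtain ⟨k, -, rfl⟩ := mem_image.1 hx
    exact Finset.orderEmbOfFin_mem S h k
  · rw [Finset.card_image_of_injective _ (S.orderEmbOfFin h).injective, card_univ,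
      Fintype.card_fin, h]

lemma orderEmb_of_image {α : Type*} [LinearOrder α] [DecidableEq α] {s : ℕ} (f : Fin s → α)
    (hf : StrictMono f) (h : (image f univ).card = s) :
    ∀ k, (image f univ).orderEmbOfFin h k = f k :=
  fun k => (congrFun
    (Finset.orderEmbOfFin_unique h (fun x => mem_image_of_mem f (mem_univ x)) hf) k).symm

lemma count_spread (hm : 1 ≤ m) (hs : 1 ≤ s)
    (hK : K + (s-1) * (m-1) = L) :
    ((Finset.powersetCard s (Finset.univ : Finset (Fin L))).filter
      (fun S => ∀ i ∈ S, ∀ j ∈ S, Fin.val i < Fin.val j → Fin.val i + m ≤ Fin.val j)).card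
      = K.choose s := by
  have htarget : (Finset.powersetCard s (Finset.univ : Finset (Fin K))).card = K.choose s := by
    rw [Finset.card_powersetCard, card_univ, Fintype.card_fin]
  rw [← htarget]
  have mul1 : ∀ a : ℕ, a * (m-1) + a = a * m := by
    intro a; rw [← Nat.mul_succ]; congr 1; omega
  have keyA : ∀ (S : Finset (Fin L)) (hc : S.card = s)
      (_ : ∀ i ∈ S, ∀ j ∈ S, Fin.val i < Fin.val j → Fin.val i + m ≤ Fin.val j) (k : Fin s),
      k.val * m ≤ (S.orderEmbOfFin hc k).val := by
    intro S hc hsp k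
    have hch := spread_chain hsp hc k.val 0 (by omega)
    have hidx : (⟨0 + k.val, by omega⟩ : Fin s) = k := by
      apply Fin.ext; simp
    rw [hidx] at hch
    omega
  have keyB : ∀ (S : Finset (Fin L)) (hc : S.card = s)
      (_ : ∀ i ∈ S, ∀ j ∈ S, Fin.val i < Fin.val j → Fin.val i + m ≤ Fin.val j) (k : Fin s),
      (S.orderEmbOfFin hc k).val - k.val * (m-1) < K := by
    intro S hc hsp k
    have hklt : k.val + (s-1-k.val) < s := by have := k.isLt; omega
    have hch := spread_chain hsp hc (s-1-k.val) k.val hklt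
    simp only [Fin.eta] at hch
    have hlastlt : (S.orderEmbOfFin hc ⟨k.val + (s-1-k.val), hklt⟩).val < L :=
      (S.orderEmbOfFin hc _).isLt
    have hA := keyA S hc hsp k
    have e1 := mul1 (s-1-k.val)
    have e2 := mul1 k.val
    have e3 : (s-1) * (m-1) = (s-1-k.val) * (m-1) + k.val * (m-1) := by
      rw [← Nat.add_mul]; congr 1; have := k.isLt; omega
    omega
  have keyC : ∀ (T : Finset (Fin K)) (hc : T.card = s) (k : Fin s),
      (T.orderEmbOfFin hc k).val + k.val * (m-1) < L := by
    intro T hc k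
    have h1 : (T.orderEmbOfFin hc k).val < K := (T.orderEmbOfFin hc k).isLt
    have h2 : k.val * (m-1) ≤ (s-1) * (m-1) :=
      Nat.mul_le_mul_right _ (by have := k.isLt; omega)
    omega
  set phi : Finset (Fin L) → Finset (Fin K) := fun S =>
    if h : S.card = s ∧ ∀ i ∈ S, ∀ j ∈ S, Fin.val i < Fin.val j → Fin.val i + m ≤ Fin.val j then
      image (fun k : Fin s =>
        (⟨(S.orderEmbOfFin h.1 k).val - k.val * (m-1), keyB S h.1 h.2 k⟩ : Fin K)) univ
    else ∅ with hphi
  set psi : Finset (Fin K) → Finset (Fin L) := fun T =>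
    if h : T.card = s then
      image (fun k : Fin s =>
        (⟨(T.orderEmbOfFin h k).val + k.val * (m-1), keyC T h k⟩ : Fin L)) univ
    else ∅ with hpsi
  have monoPhi : ∀ (S : Finset (Fin L)) (hc : S.card = s)
      (hsp : ∀ i ∈ S, ∀ j ∈ S, Fin.val i < Fin.val j → Fin.val i + m ≤ Fin.val j),
      StrictMono (fun k : Fin s =>
        (⟨(S.orderEmbOfFin hc k).val - k.val * (m-1), keyB S hc hsp k⟩ : Fin K)) := by
    intro S hc hsp k l hkl
    simp only [Fin.mk_lt_mk]
    have hkl' : k.val < l.val := hkl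
    have hd : k.val + (l.val - k.val) < s := by have := l.isLt; omega
    have hch := spread_chain hsp hc (l.val - k.val) k.val hd
    simp only [Fin.eta] at hch
    have hche : (⟨k.val + (l.val - k.val), hd⟩ : Fin s) = l := by
      apply Fin.ext; simp; omega
    rw [hche] at hch
    have hA := keyA S hc hsp k
    have e1 := mul1 (l.val - k.val)
    have e2 := mul1 k.val
    have e3 : l.val * (m-1) = k.val * (m-1) + (l.val - k.val) * (m-1) := by
      rw [← Nat.add_mul]; congr 1; omega
    omega
  have monoPsi : ∀ (T : Finset (Fin K)) (hc : T.card = s),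
      StrictMono (fun k : Fin s =>
        (⟨(T.orderEmbOfFin hc k).val + k.val * (m-1), keyC T hc k⟩ : Fin L)) := by
    intro T hc k l hkl
    simp only [Fin.mk_lt_mk]
    have h1 : (T.orderEmbOfFin hc k).val < (T.orderEmbOfFin hc l).val :=
      (T.orderEmbOfFin hc).strictMono hkl
    have h2 : k.val * (m-1) ≤ l.val * (m-1) :=
      Nat.mul_le_mul_right _ (le_of_lt hkl)
    omega
  have spreadPsi : ∀ (T : Finset (Fin K)) (hc : T.card = s),
      ∀ i ∈ image (fun k : Fin s =>
          (⟨(T.orderEmbOfFin hc k).val + k.val * (m-1), keyC T hc k⟩ : Fin L)) univ,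
      ∀ j ∈ image (fun k : Fin s =>
          (⟨(T.orderEmbOfFin hc k).val + k.val * (m-1), keyC T hc k⟩ : Fin L)) univ,
      Fin.val i < Fin.val j → Fin.val i + m ≤ Fin.val j := by
    intro T hc i hi j hj hij
    obtain ⟨k, -, rfl⟩ := mem_image.1 hi
    obtain ⟨l, -, rfl⟩ := mem_image.1 hj
    simp only at hij ⊢
    have hkl : k < l := by
      by_contra hcon
      push_neg at hcon
      rcases eq_or_lt_of_le hcon with h | h
      · subst h; omega
      · have hlt := monoPsi T hc h
        simp only [Fin.mk_lt_mk] at hlt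
        omega
    have htriv : ∀ i ∈ T, ∀ j ∈ T, Fin.val i < Fin.val j → Fin.val i + 1 ≤ Fin.val j := by
      intro a _ b _ hab; omega
    have hd : k.val + (l.val - k.val) < s := by have := l.isLt; omega
    have hch := spread_chain htriv hc (l.val - k.val) k.val hd
    simp only [Fin.eta, mul_one] at hch
    have hche : (⟨k.val + (l.val - k.val), hd⟩ : Fin s) = l := by
      apply Fin.ext; simp; omega
    rw [hche] at hch
    have hd1 : 1 ≤ l.val - k.val := by
      have : k.val < l.val := hkl
      omega
    have e3 : l.val * (m-1) = k.val * (m-1) + (l.val - k.val) * (m-1) := by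
      rw [← Nat.add_mul]; congr 1
      have : k.val < l.val := hkl
      omega
    have e4 : m ≤ (l.val - k.val) * m := Nat.le_mul_of_pos_left m (by omega)
    have e1 := mul1 (l.val - k.val)
    omega
  apply Finset.card_nbij' phi psi
  · intro S hS
    rw [Finset.mem_coe, mem_filter, Finset.mem_powersetCard] at hS
    obtain ⟨⟨-, hc⟩, hsp⟩ := hS
    have h1 : phi S = image (fun k : Fin s =>
        (⟨(S.orderEmbOfFin hc k).val - k.val * (m-1), keyB S hc hsp k⟩ : Fin K)) univ := by
      rw [hphi]; exact dif_pos ⟨hc, hsp⟩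
    rw [h1, Finset.mem_coe, Finset.mem_powersetCard]
    exact ⟨subset_univ _, by
      rw [Finset.card_image_of_injective _ (monoPhi S hc hsp).injective, card_univ,
        Fintype.card_fin]⟩
  · intro T hT
    rw [Finset.mem_coe, Finset.mem_powersetCard] at hT
    obtain ⟨-, hc⟩ := hT
    have h1 : psi T = image (fun k : Fin s =>
        (⟨(T.orderEmbOfFin hc k).val + k.val * (m-1), keyC T hc k⟩ : Fin L)) univ := by
      rw [hpsi]; exact dif_pos hc
    rw [h1, Finset.mem_coe, mem_filter, Finset.mem_powersetCard]
    refine ⟨⟨subset_univ _, ?_⟩, spreadPsi T hc⟩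
    rw [Finset.card_image_of_injective _ (monoPsi T hc).injective, card_univ, Fintype.card_fin]
  · intro S hS
    rw [Finset.mem_coe, mem_filter, Finset.mem_powersetCard] at hS
    obtain ⟨⟨-, hc⟩, hsp⟩ := hS
    set g : Fin s → Fin K := fun k =>
      (⟨(S.orderEmbOfFin hc k).val - k.val * (m-1), keyB S hc hsp k⟩ : Fin K) with hg
    have h1 : phi S = image g univ := by
      rw [hphi]; exact dif_pos ⟨hc, hsp⟩
    have hcg : (image g univ).card = s := by
      rw [Finset.card_image_of_injective _ (monoPhi S hc hsp).injective, card_univ,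
        Fintype.card_fin]
    have h2 : psi (image g univ) = image (fun k : Fin s =>
        (⟨((image g univ).orderEmbOfFin hcg k).val + k.val * (m-1),
          keyC _ hcg k⟩ : Fin L)) univ := by
      rw [hpsi]; exact dif_pos hcg
    rw [h1, h2]
    have hemb := orderEmb_of_image g (monoPhi S hc hsp) hcg
    have himg : (fun k : Fin s =>
        (⟨((image g univ).orderEmbOfFin hcg k).val + k.val * (m-1),
          keyC _ hcg k⟩ : Fin L)) = fun k => S.orderEmbOfFin hc k := by
      funext k
      apply Fin.ext
      simp only
      rw [hemb k]
      simp only [hg]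
      have hA := keyA S hc hsp k
      have e2 := mul1 k.val
      omega
    rw [himg]
    exact image_sorted_eq hc
  · intro T hT
    rw [Finset.mem_coe, Finset.mem_powersetCard] at hT
    obtain ⟨-, hc⟩ := hT
    set g : Fin s → Fin L := fun k =>
      (⟨(T.orderEmbOfFin hc k).val + k.val * (m-1), keyC T hc k⟩ : Fin L) with hg
    have h1 : psi T = image g univ := by
      rw [hpsi]; exact dif_pos hc
    have hcg : (image g univ).card = s := by
      rw [Finset.card_image_of_injective _ (monoPsi T hc).injective, card_univ, Fintype.card_fin]
    have hspg := spreadPsi T hc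
    have h2 : phi (image g univ) = image (fun k : Fin s =>
        (⟨((image g univ).orderEmbOfFin hcg k).val - k.val * (m-1),
          keyB _ hcg hspg k⟩ : Fin K)) univ := by
      rw [hphi]; exact dif_pos ⟨hcg, hspg⟩
    rw [h1, h2]
    have hemb := orderEmb_of_image g (monoPsi T hc) hcg
    have himg : (fun k : Fin s =>
        (⟨((image g univ).orderEmbOfFin hcg k).val - k.val * (m-1),
          keyB _ hcg hspg k⟩ : Fin K)) = fun k => T.orderEmbOfFin hc k := by
      funext k
      apply Fin.ext
      simp only
      rw [hemb k]
      simp only [hg]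
      omega
    rw [himg]
    exact image_sorted_eq hc

end

lemma surj_count {ι : Type*} [Fintype ι] [DecidableEq ι] (t : ℕ) (S : Finset ι) :
    (((Finset.univ : Finset (Fin t → ι)).filter
        (fun g => Finset.image g Finset.univ = S)).card : ℝ)
      = ∑ r ∈ Finset.range (S.card + 1),
          (S.card.choose r : ℝ) * (r : ℝ) ^ t * (-1:ℝ) ^ (S.card - r) := by
  have hd : ∀ R : Finset ι, ((R.card : ℝ))^t
      = ∑ R' ∈ R.powerset,
          (((Finset.univ : Finset (Fin t → ι)).filter
            (fun g => Finset.image g Finset.univ = R')).card : ℝ) := by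
    intro R
    have hsub : ((Finset.univ : Finset (Fin t → ι)).filter
        (fun g => Finset.image g Finset.univ ⊆ R)) = Fintype.piFinset (fun _ : Fin t => R) := by
      ext g
      simp [Fintype.mem_piFinset, Finset.image_subset_iff]
    have hcard : ((Finset.univ : Finset (Fin t → ι)).filter
        (fun g => Finset.image g Finset.univ ⊆ R)).card = R.card ^ t := by
      rw [hsub, Fintype.card_piFinset]
      simp
    have hfib : ((Finset.univ : Finset (Fin t → ι)).filter
        (fun g => Finset.image g Finset.univ ⊆ R)).card
        = ∑ R' ∈ R.powerset,
            (((Finset.univ : Finset (Fin t → ι)).filter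
              (fun g => Finset.image g Finset.univ ⊆ R)).filter
                (fun g => Finset.image g Finset.univ = R')).card :=
      Finset.card_eq_sum_card_fiberwise (fun g hg => mem_powerset.2 (mem_filter.1 hg).2)
    have hfib2 : ∀ R' ∈ R.powerset,
        (((Finset.univ : Finset (Fin t → ι)).filter
          (fun g => Finset.image g Finset.univ ⊆ R)).filter
            (fun g => Finset.image g Finset.univ = R'))
        = ((Finset.univ : Finset (Fin t → ι)).filter
            (fun g => Finset.image g Finset.univ = R')) := by
      intro R' hR'
      ext g
      simp only [mem_filter, mem_univ, true_and]
      exact ⟨fun h => h.2, fun h => ⟨h ▸ mem_powerset.1 hR', h⟩⟩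
    rw [← Nat.cast_pow, ← hcard, hfib]
    push_cast
    refine Finset.sum_congr rfl fun R' hR' => ?_
    rw [hfib2 R' hR']
  have hm := mobius_lemma
    (fun S => (((Finset.univ : Finset (Fin t → ι)).filter
        (fun g => Finset.image g Finset.univ = S)).card : ℝ))
    (fun R => ((R.card : ℝ))^t) hd S
  rw [← hm]
  rw [Finset.sum_powerset_apply_card (f := fun r => (-1:ℝ)^(S.card - r) * (r:ℝ)^t)]
  refine Finset.sum_congr rfl fun r _ => ?_
  rw [nsmul_eq_mul]
  ring

set_option maxHeartbeats 1000000 in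
-- no-double-occurrence consequence
lemma no_overlap_occ {A : Type*} {n m : ℕ} (hm : 1 ≤ m) (hmn : m ≤ n)
    (w : Fin m → A) (hw : NonOverlapping (List.ofFn w))
    (x : Fin n → A) (a b : ℕ) (hab : a < b) (hbm : b < a + m) (hb : b + m ≤ n)
    (h1 : ∀ k : Fin m, x ⟨a + k.val, by have := k.isLt; omega⟩ = w k)
    (h2 : ∀ k : Fin m, x ⟨b + k.val, by have := k.isLt; omega⟩ = w k) : False := by
  apply hw
  refine ⟨List.ofFn (fun k : Fin (b - a + m) => x ⟨a + k.val, by have := k.isLt; omega⟩),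
    0, b - a, ?_, ⟨?_, ?_⟩, ⟨?_, ?_⟩, Or.inr (by omega)⟩
  · simp only [List.length_ofFn]
    omega
  · simp only [List.length_ofFn]
    omega
  · rw [List.drop_zero]
    apply List.ext_getElem
    · simp only [List.length_take, List.length_ofFn]
      omega
    · intro k hk1 hk2
      simp only [List.getElem_take, List.getElem_ofFn]
      have hk : k < m := by simpa [List.length_take, List.length_ofFn] using hk1
      have := h1 ⟨k, hk⟩
      convert this using 2
  · simp only [List.length_ofFn]
    omega
  · apply List.ext_getElem
    · simp only [List.length_take, List.length_drop, List.length_ofFn]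
      omega
    · intro k hk1 hk2
      have hk : k < m := by
        simpa [List.length_take, List.length_drop, List.length_ofFn] using hk1
      simp only [List.getElem_take, List.getElem_drop, List.getElem_ofFn]
      have := h2 ⟨k, hk⟩
      rw [← this]
      congr 1
      apply Fin.ext
      simp only
      omega

set_option maxHeartbeats 1000000 in
theorem aux_main {A : Type*} [Fintype A] [DecidableEq A]
    (p : A → ℝ) (hp1 : ∑ a, p a = 1)
    (n m : ℕ) (hm : 1 ≤ m) (hmn : m ≤ n)
    (w : Fin m → A) (hw : NonOverlapping (List.ofFn w))
    (t : ℕ) (ht : 1 ≤ t)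
    (emb : Fin (n-m+1) → Fin m → Fin n) (hemb : ∀ i j, (emb i j).val = i.val + j.val)
    (I : Fin (n-m+1) → (Fin n → A) → ℝ)
    (hI : ∀ i x, I i x = if ∀ j : Fin m, x (emb i j) = w j then 1 else 0) :
    ∑ x : Fin n → A, (∏ i, p (x i)) * (∑ i : Fin (n-m+1), I i x) ^ t
      = ∑ s ∈ Finset.Icc 1 (min (n / m) t),
          (∑ r ∈ Finset.range (s + 1), (s.choose r : ℝ) * (r : ℝ) ^ t * (-1 : ℝ) ^ (s - r)) *
            ((n - s * m + s).choose s : ℝ) * (∏ j, p (w j)) ^ s := by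
  have hI01 : ∀ i x, I i x = 0 ∨ I i x = 1 := by
    intro i x
    rw [hI]
    by_cases h : ∀ j : Fin m, x (emb i j) = w j
    · right; rw [if_pos h]
    · left; rw [if_neg h]
  -- Step A: expand the power
  have stepA : ∀ x : Fin n → A,
      (∑ i : Fin (n-m+1), I i x) ^ t = ∑ g : Fin t → Fin (n-m+1), ∏ k, I (g k) x := by
    intro x
    rw [Finset.sum_pow', Fintype.piFinset_univ]
  -- Step B: collapse repeated factors to the image
  have stepB : ∀ (g : Fin t → Fin (n-m+1)) (x : Fin n → A),
      ∏ k, I (g k) x = ∏ i ∈ image g univ, I i x := by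
    intro g x
    rw [← Finset.prod_fiberwise_of_maps_to (g := g)
      (fun k _ => mem_image_of_mem g (mem_univ k)) (fun k => I (g k) x)]
    refine Finset.prod_congr rfl fun i hi => ?_
    have hfib : ∀ k ∈ univ.filter (fun k => g k = i), I (g k) x = I i x := fun k hk => by
      rw [(mem_filter.1 hk).2]
    rw [Finset.prod_congr rfl hfib, Finset.prod_const]
    have hpos : 0 < (univ.filter (fun k => g k = i)).card := by
      rw [card_pos]
      obtain ⟨k, -, rfl⟩ := mem_image.1 hi
      exact ⟨k, mem_filter.2 ⟨mem_univ k, rfl⟩⟩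
    rcases hI01 i x with h | h <;> rw [h]
    · exact zero_pow (by omega)
    · exact one_pow _
  -- value of the correlation sum on spread sets
  have hQspread : ∀ S : Finset (Fin (n-m+1)),
      (∀ i ∈ S, ∀ j ∈ S, Fin.val i < Fin.val j → Fin.val i + m ≤ Fin.val j) →
      ∑ x : Fin n → A, (∏ i, p (x i)) * ∏ i ∈ S, I i x = (∏ j, p (w j)) ^ S.card := by
    intro S hsp
    have hinj : Set.InjOn (fun q : Fin (n-m+1) × Fin m => emb q.1 q.2)
        ↑(S ×ˢ (univ : Finset (Fin m))) := by
      intro q1 hq1 q2 hq2 heq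
      simp only [coe_product, Set.mem_prod, mem_coe] at hq1 hq2
      have hv : q1.1.val + q1.2.val = q2.1.val + q2.2.val := by
        have := congrArg Fin.val heq
        simpa [hemb] using this
      have h2m := q1.2.isLt
      have h2m' := q2.2.isLt
      rcases lt_trichotomy q1.1.val q2.1.val with hlt | heq1 | hgt
      · have := hsp q1.1 hq1.1 q2.1 hq2.1 hlt
        omega
      · have h1 : q1.1 = q2.1 := Fin.ext heq1
        have h2 : q1.2 = q2.2 := Fin.ext (by omega)
        exact Prod.ext h1 h2
      · have := hsp q2.1 hq2.1 q1.1 hq1.1 hgt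
        omega
    have hprod : ∀ x : Fin n → A, ∏ i ∈ S, I i x
        = ∏ q ∈ S ×ˢ (univ : Finset (Fin m)),
            (if x (emb q.1 q.2) = w q.2 then (1:ℝ) else 0) := by
      intro x
      rw [Finset.prod_product]
      refine Finset.prod_congr rfl fun i _ => ?_
      rw [hI]
      by_cases h : ∀ j : Fin m, x (emb i j) = w j
      · rw [if_pos h]
        exact (Finset.prod_eq_one fun j _ => if_pos (h j)).symm
      · rw [if_neg h]
        push_neg at h
        obtain ⟨j₀, hj₀⟩ := h
        symm
        exact Finset.prod_eq_zero (mem_univ j₀) (if_neg hj₀)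
    calc ∑ x : Fin n → A, (∏ i, p (x i)) * ∏ i ∈ S, I i x
        = ∑ x : Fin n → A, (∏ i, p (x i)) * ∏ q ∈ S ×ˢ (univ : Finset (Fin m)),
            (if x (emb q.1 q.2) = w q.2 then (1:ℝ) else 0) :=
          Finset.sum_congr rfl fun x _ => by rw [hprod x]
      _ = ∏ q ∈ S ×ˢ (univ : Finset (Fin m)), p (w q.2) :=
          fact_lemma p hp1 _ _ _ hinj
      _ = (∏ j, p (w j)) ^ S.card := by
          rw [Finset.prod_product]
          calc ∏ i ∈ S, ∏ y : Fin m, p (w ((i, y).2))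
              = ∏ i ∈ S, ∏ j, p (w j) := rfl
            _ = (∏ j, p (w j)) ^ S.card := Finset.prod_const _
  -- the correlation sum vanishes on non-spread sets
  have hQzero : ∀ S : Finset (Fin (n-m+1)),
      ¬ (∀ i ∈ S, ∀ j ∈ S, Fin.val i < Fin.val j → Fin.val i + m ≤ Fin.val j) →
      ∀ x : Fin n → A, ∏ i ∈ S, I i x = 0 := by
    intro S hsp x
    push_neg at hsp
    obtain ⟨i, hiS, j, hjS, hij, hover⟩ := hsp
    by_cases h1 : ∀ jj : Fin m, x (emb i jj) = w jj
    · refine Finset.prod_eq_zero hjS ?_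
      rw [hI, if_neg]
      intro h2
      have hjlt : j.val < n - m + 1 := j.isLt
      refine no_overlap_occ hm hmn w hw x i.val j.val hij hover (by omega) ?_ ?_
      · intro k
        have := h1 k
        rwa [show (emb i k) = ⟨i.val + k.val, by have := i.isLt; have := k.isLt; omega⟩
          from Fin.ext (by rw [hemb])] at this
      · intro k
        have := h2 k
        rwa [show (emb j k) = ⟨j.val + k.val, by have := j.isLt; have := k.isLt; omega⟩
          from Fin.ext (by rw [hemb])] at this
    · exact Finset.prod_eq_zero hiS (by rw [hI, if_neg h1])
  have hQ : ∀ S : Finset (Fin (n-m+1)),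
      ∑ x : Fin n → A, (∏ i, p (x i)) * ∏ i ∈ S, I i x
      = if (∀ i ∈ S, ∀ j ∈ S, Fin.val i < Fin.val j → Fin.val i + m ≤ Fin.val j)
        then (∏ j, p (w j)) ^ S.card else 0 := by
    intro S
    by_cases h : ∀ i ∈ S, ∀ j ∈ S, Fin.val i < Fin.val j → Fin.val i + m ≤ Fin.val j
    · rw [if_pos h]; exact hQspread S h
    · rw [if_neg h]
      calc ∑ x : Fin n → A, (∏ i, p (x i)) * ∏ i ∈ S, I i x
          = ∑ _x : Fin n → A, (0:ℝ) :=
            Finset.sum_congr rfl fun x _ => by rw [hQzero S h x, mul_zero]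
        _ = 0 := Finset.sum_const_zero
  calc ∑ x : Fin n → A, (∏ i, p (x i)) * (∑ i : Fin (n-m+1), I i x) ^ t
      = ∑ x : Fin n → A, ∑ g : Fin t → Fin (n-m+1),
          (∏ i, p (x i)) * ∏ i ∈ image g univ, I i x := by
        refine Finset.sum_congr rfl fun x _ => ?_
        rw [stepA x, Finset.mul_sum]
        exact Finset.sum_congr rfl fun g _ => by rw [stepB g x]
    _ = ∑ g : Fin t → Fin (n-m+1), ∑ x : Fin n → A,
          (∏ i, p (x i)) * ∏ i ∈ image g univ, I i x := Finset.sum_comm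
    _ = ∑ S ∈ (univ : Finset (Fin (n-m+1))).powerset,
          ∑ g ∈ (univ : Finset (Fin t → Fin (n-m+1))).filter (fun g => image g univ = S),
            ∑ x : Fin n → A, (∏ i, p (x i)) * ∏ i ∈ image g univ, I i x :=
        (Finset.sum_fiberwise_of_maps_to (fun g _ => mem_powerset.2 (subset_univ _)) _).symm
    _ = ∑ S ∈ (univ : Finset (Fin (n-m+1))).powerset,
          (((univ : Finset (Fin t → Fin (n-m+1))).filter (fun g => image g univ = S)).card : ℝ)
            * (if (∀ i ∈ S, ∀ j ∈ S, Fin.val i < Fin.val j → Fin.val i + m ≤ Fin.val j)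
               then (∏ j, p (w j)) ^ S.card else 0) := by
        refine Finset.sum_congr rfl fun S _ => ?_
        calc ∑ g ∈ (univ : Finset (Fin t → Fin (n-m+1))).filter (fun g => image g univ = S),
              ∑ x : Fin n → A, (∏ i, p (x i)) * ∏ i ∈ image g univ, I i x
            = ∑ _g ∈ (univ : Finset (Fin t → Fin (n-m+1))).filter (fun g => image g univ = S),
              (if (∀ i ∈ S, ∀ j ∈ S, Fin.val i < Fin.val j → Fin.val i + m ≤ Fin.val j)
               then (∏ j, p (w j)) ^ S.card else 0) :=
              Finset.sum_congr rfl fun g hg => by rw [(mem_filter.1 hg).2, hQ S]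
          _ = _ := by rw [Finset.sum_const, nsmul_eq_mul]
    _ = ∑ S ∈ (univ : Finset (Fin (n-m+1))).powerset,
          (∑ r ∈ Finset.range (S.card + 1),
            (S.card.choose r : ℝ) * (r : ℝ) ^ t * (-1:ℝ) ^ (S.card - r))
            * (if (∀ i ∈ S, ∀ j ∈ S, Fin.val i < Fin.val j → Fin.val i + m ≤ Fin.val j)
               then (∏ j, p (w j)) ^ S.card else 0) := by
        refine Finset.sum_congr rfl fun S _ => ?_
        rw [surj_count t S]
    _ = ∑ s ∈ Finset.range ((n-m+1) + 1),
          (((Finset.powersetCard s (Finset.univ : Finset (Fin (n-m+1)))).filter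
            (fun S => ∀ i ∈ S, ∀ j ∈ S, Fin.val i < Fin.val j → Fin.val i + m ≤ Fin.val j)).card : ℝ)
            * ((∑ r ∈ Finset.range (s + 1),
                (s.choose r : ℝ) * (r : ℝ) ^ t * (-1:ℝ) ^ (s - r)) * (∏ j, p (w j)) ^ s) := by
        rw [Finset.sum_powerset]
        rw [show ((univ : Finset (Fin (n-m+1))).card) = n-m+1 by
          rw [card_univ, Fintype.card_fin]]
        refine Finset.sum_congr rfl fun s _ => ?_
        simp only [mul_ite, mul_zero]
        rw [← Finset.sum_filter]
        have hcards : ∀ S ∈ (Finset.powersetCard s (Finset.univ : Finset (Fin (n-m+1)))).filter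
            (fun S => ∀ i ∈ S, ∀ j ∈ S, Fin.val i < Fin.val j → Fin.val i + m ≤ Fin.val j),
            S.card = s := fun S hS => (Finset.mem_powersetCard.1 (mem_filter.1 hS).1).2
        calc ∑ S ∈ (Finset.powersetCard s (Finset.univ : Finset (Fin (n-m+1)))).filter
              (fun S => ∀ i ∈ S, ∀ j ∈ S, Fin.val i < Fin.val j → Fin.val i + m ≤ Fin.val j),
              (∑ r ∈ Finset.range (S.card + 1),
                (S.card.choose r : ℝ) * (r : ℝ) ^ t * (-1:ℝ) ^ (S.card - r))
                * (∏ j, p (w j)) ^ S.card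
            = ∑ _S ∈ (Finset.powersetCard s (Finset.univ : Finset (Fin (n-m+1)))).filter
              (fun S => ∀ i ∈ S, ∀ j ∈ S, Fin.val i < Fin.val j → Fin.val i + m ≤ Fin.val j),
              (∑ r ∈ Finset.range (s + 1),
                (s.choose r : ℝ) * (r : ℝ) ^ t * (-1:ℝ) ^ (s - r)) * (∏ j, p (w j)) ^ s :=
              Finset.sum_congr rfl fun S hS => by rw [hcards S hS]
          _ = _ := by rw [Finset.sum_const, nsmul_eq_mul]
    _ = ∑ s ∈ Finset.Icc 1 (min (n / m) t),
          (∑ r ∈ Finset.range (s + 1), (s.choose r : ℝ) * (r : ℝ) ^ t * (-1 : ℝ) ^ (s - r)) *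
            ((n - s * m + s).choose s : ℝ) * (∏ j, p (w j)) ^ s := by
        have hmul : ∀ a b : ℕ, 1 ≤ a → 1 ≤ b → a + b ≤ a * b + 1 := by
          intro a b ha hb
          obtain ⟨a', rfl⟩ : ∃ a', a = a' + 1 := ⟨a - 1, by omega⟩
          obtain ⟨b', rfl⟩ : ∃ b', b = b' + 1 := ⟨b - 1, by omega⟩
          have : (a'+1) * (b'+1) = a'*b' + a' + b' + 1 := by ring
          omega
        have hsub : Finset.Icc 1 (min (n / m) t) ⊆ Finset.range ((n-m+1) + 1) := by
          intro s hs
          rw [Finset.mem_Icc] at hs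
          rw [Finset.mem_range]
          have hsm : s * m ≤ n := by
            have h1 : s ≤ n / m := le_trans hs.2 (min_le_left _ _)
            exact (Nat.le_div_iff_mul_le (by omega)).1 h1
          have := hmul s m hs.1 hm
          omega
        refine (Finset.sum_subset hsub ?_).symm.trans ?_
        · intro s hsr hsn
          rw [Finset.mem_range] at hsr
          rw [Finset.mem_Icc, not_and_or] at hsn
          rcases hsn with h0 | hgt
          · -- s = 0
            have hs0 : s = 0 := by omega
            subst hs0
            simp [zero_pow (show t ≠ 0 by omega)]
          · push_neg at hgt
            rcases Nat.lt_or_ge (n / m) s with hdiv | hdiv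
            · -- no spread sets of size s
              have h1 : 1 ≤ s := by
                rcases Nat.eq_zero_or_pos s with h | h
                · subst h; simp at hdiv
                · exact h
              have hempty : (Finset.powersetCard s (Finset.univ : Finset (Fin (n-m+1)))).filter
                  (fun S => ∀ i ∈ S, ∀ j ∈ S, Fin.val i < Fin.val j → Fin.val i + m ≤ Fin.val j)
                  = ∅ := by
                rw [Finset.filter_eq_empty_iff]
                intro S hS hsp
                have hc : S.card = s := (Finset.mem_powersetCard.1 hS).2
                have hch := spread_chain hsp hc (s-1) 0 (by omega)
                have hlt : (S.orderEmbOfFin hc ⟨0 + (s-1), by omega⟩).val < n - m + 1 :=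
                  (S.orderEmbOfFin hc _).isLt
                have he : (s-1) * m + m = s * m := by
                  rw [← Nat.succ_mul]; congr 1; omega
                have hsm : s * m ≤ n := by omega
                have : s ≤ n / m := (Nat.le_div_iff_mul_le (by omega)).2 hsm
                omega
              rw [hempty]
              simp
            · -- s > t : the surjection count vanishes
              have hts : t < s := by omega
              have h1 : 1 ≤ s := by omega
              obtain ⟨S, -, hSc⟩ := Finset.exists_subset_card_eq
                (s := (univ : Finset (Fin (n-m+1)))) (n := s)
                (by rw [card_univ, Fintype.card_fin]; omega)
              have hzero : (((Finset.univ : Finset (Fin t → Fin (n-m+1))).filter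
                  (fun g => Finset.image g Finset.univ = S)).card : ℝ) = 0 := by
                rw [Finset.filter_eq_empty_iff.2 ?_]
                · simp
                · intro g _
                  intro hIm
                  have h2 : (image g univ).card ≤ t := by
                    calc (image g univ).card ≤ (univ : Finset (Fin t)).card :=
                        Finset.card_image_le
                      _ = t := by rw [card_univ, Fintype.card_fin]
                  rw [hIm, hSc] at h2
                  omega
              have ha : (∑ r ∈ Finset.range (s + 1),
                  (s.choose r : ℝ) * (r : ℝ) ^ t * (-1:ℝ) ^ (s - r)) = 0 := by
                have := surj_count t S
                rw [hSc] at this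
                rw [← this, hzero]
              rw [ha]
              ring
        · refine Finset.sum_congr rfl fun s hs => ?_
          rw [Finset.mem_Icc] at hs
          have hsm : s * m ≤ n := by
            have h1 : s ≤ n / m := le_trans hs.2 (min_le_left _ _)
            exact (Nat.le_div_iff_mul_le (by omega)).1 h1
          have hK : (n - s * m + s) + (s-1) * (m-1) = n - m + 1 := by
            obtain ⟨s', rfl⟩ : ∃ s', s = s' + 1 := ⟨s - 1, by omega⟩
            obtain ⟨m', rfl⟩ : ∃ m', m = m' + 1 := ⟨m - 1, by omega⟩
            have h1 : (s'+1) * (m'+1) = s'*m' + s' + m' + 1 := by ring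
            simp only [Nat.add_sub_cancel]
            omega
          rw [count_spread hm hs.1 hK]
          ring

/-- Higher moments of the sliding-block count of a non-overlapping word `w`:
`E(N_w^t) = ∑_{s=1}^{min(T,t)} A_{t,s} (n - s m + s choose s) P(w)^s`, where
`A_{t,s} = ∑_r (s choose r) r^t (-1)^{s-r}` and `T = max{t : n - t m ≥ 0} = ⌊n/m⌋`. -/
theorem stmt10 {A : Type*} [Fintype A] [DecidableEq A]
    (p : A → ℝ) (hp : ∀ a, 0 ≤ p a) (hp1 : ∑ a, p a = 1)
    (n m : ℕ) (hm : 1 ≤ m) (hmn : m ≤ n)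
    (w : Fin m → A) (hw : NonOverlapping (List.ofFn w))
    (t : ℕ) (ht : 1 ≤ t) :
    ∑ x : Fin n → A, (∏ i, p (x i)) *
        (∑ i : Fin (n - m + 1),
          if ∀ j : Fin m, x ⟨i.val + j.val, by have := i.isLt; have := j.isLt; omega⟩ = w j
          then (1 : ℝ) else 0) ^ t
      = ∑ s ∈ Finset.Icc 1 (min (n / m) t),
          (∑ r ∈ Finset.range (s + 1), (s.choose r : ℝ) * (r : ℝ) ^ t * (-1 : ℝ) ^ (s - r)) *
            ((n - s * m + s).choose s : ℝ) * (∏ j, p (w j)) ^ s :=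
  aux_main p hp1 n m hm hmn w hw t ht
    (fun i j => ⟨i.val + j.val, by have := i.isLt; have := j.isLt; omega⟩)
    (fun _ _ => rfl)
    (fun i x => if ∀ j : Fin m, x ⟨i.val + j.val, by have := i.isLt; have := j.isLt; omega⟩ = w j
      then (1 : ℝ) else 0)
    (fun _ _ => rfl)
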